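/- Let N ∈ ℕ and A = (a_{ij}) be an N×N Hermitian positive matrix such that max_{i,j} |a_{ij} − δ_{ij}| ≤ δ for some δ ≤ 1/(100N). Then every eigenvalue λ of A satisfies |λ − 1| ≤ 2Nδ, and there exists a Hermitian matrix B = (b_{ij}) with A = B·B* (B times its conjugate transpose) and max_{i,j} |b_{ij} − δ_{ij}| ≤ 2Nδ. -/

import Mathlib

open scoped ComplexOrder

open Matrix in
private lemma aux_row_norm {N : ℕ} (U : Matrix.unitaryGroup (Fin N) ℂ) (i : Fin N) :
    ∑ k, ‖(U : Matrix (Fin N) (Fin N) ℂ) i k‖ ^ 2 = 1 := by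
  have hUU : (U : Matrix (Fin N) (Fin N) ℂ) * star (U : Matrix (Fin N) (Fin N) ℂ) = 1 :=
    Matrix.mem_unitaryGroup_iff.mp U.2
  have h := congrFun (congrFun hUU i) i
  rw [Matrix.mul_apply] at h
  simp only [Matrix.star_apply, Matrix.one_apply_eq] at h
  have : ∑ k, ((‖(U : Matrix (Fin N) (Fin N) ℂ) i k‖ ^ 2 : ℝ) : ℂ) = 1 := by
    rw [← h]
    congr 1 with k
    rw [show (star ((U : Matrix (Fin N) (Fin N) ℂ) i k)) = starRingEnd ℂ ((U : Matrix (Fin N) (Fin N) ℂ) i k) from rfl, Complex.mul_conj']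
    push_cast
    ring
  exact_mod_cast this

open Matrix in
private lemma aux_entry_bound {N : ℕ} (U : Matrix.unitaryGroup (Fin N) ℂ)
    (d : Fin N → ℂ) (c : ℝ) (hd : ∀ k, ‖d k‖ ≤ c) (i j : Fin N) :
    ‖((U : Matrix (Fin N) (Fin N) ℂ) * Matrix.diagonal d *
      star (U : Matrix (Fin N) (Fin N) ℂ)) i j‖ ≤ c := by
  set M : Matrix (Fin N) (Fin N) ℂ := (U : Matrix (Fin N) (Fin N) ℂ) with hM
  have hc : 0 ≤ c := le_trans (norm_nonneg _) (hd j)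
  have hentry : (M * Matrix.diagonal d * star M) i j = ∑ k, M i k * d k * star (M j k) := by
    simp only [Matrix.mul_apply, Matrix.star_apply]
    congr 1 with k
    rw [Finset.sum_eq_single k (fun b _ hb => by rw [Matrix.diagonal_apply_ne d hb, mul_zero]) (by simp)]
    simp [Matrix.diagonal]
  rw [hentry]
  have hCS : ∑ k, ‖M i k‖ * ‖M j k‖ ≤ 1 := by
    have h := Finset.sum_mul_sq_le_sq_mul_sq Finset.univ (fun k => ‖M i k‖) (fun k => ‖M j k‖)
    rw [aux_row_norm U i, aux_row_norm U j, mul_one] at h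
    have hnn : 0 ≤ ∑ k, ‖M i k‖ * ‖M j k‖ :=
      Finset.sum_nonneg fun k _ => mul_nonneg (norm_nonneg _) (norm_nonneg _)
    nlinarith [h, hnn]
  calc ‖∑ k, M i k * d k * star (M j k)‖ ≤ ∑ k, ‖M i k * d k * star (M j k)‖ :=
        norm_sum_le _ _
    _ ≤ ∑ k, ‖M i k‖ * ‖M j k‖ * c := by
        refine Finset.sum_le_sum fun k _ => ?_
        rw [norm_mul, norm_mul, norm_star]
        calc ‖M i k‖ * ‖d k‖ * ‖M j k‖ ≤ ‖M i k‖ * c * ‖M j k‖ := by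
              gcongr; exact hd k
          _ = ‖M i k‖ * ‖M j k‖ * c := by ring
    _ = (∑ k, ‖M i k‖ * ‖M j k‖) * c := by rw [← Finset.sum_mul]
    _ ≤ 1 * c := by gcongr
    _ = c := one_mul c

open Matrix in
private lemma aux_eig {N : ℕ} {A : Matrix (Fin N) (Fin N) ℂ} (hH : A.IsHermitian)
    {δ : ℝ} (hδ0 : 0 ≤ δ)
    (hentry : ∀ i j, ‖A i j - (1 : Matrix (Fin N) (Fin N) ℂ) i j‖ ≤ δ)
    (i : Fin N) : |hH.eigenvalues i - 1| ≤ N * δ := by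
  set v : Fin N → ℂ := ⇑(hH.eigenvectorBasis i) with hv_def
  have hv : A *ᵥ v = hH.eigenvalues i • v := hH.mulVec_eigenvectorBasis i
  have hj : ∃ j, v j ≠ 0 := by
    by_contra h
    push_neg at h
    have hzero : hH.eigenvectorBasis i = 0 := by
      ext j; exact h j
    have := hH.eigenvectorBasis.orthonormal.ne_zero i
    exact this hzero
  obtain ⟨j, hj⟩ := hj
  obtain ⟨i0, -, hmax⟩ := Finset.exists_max_image Finset.univ (fun k => ‖v k‖)
    ⟨j, Finset.mem_univ j⟩
  have hpos : 0 < ‖v i0‖ := lt_of_lt_of_le (norm_pos_iff.mpr hj) (hmax j (Finset.mem_univ j))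
  have key : ((hH.eigenvalues i : ℂ) - 1) * v i0
      = ∑ k, (A i0 k - (1 : Matrix (Fin N) (Fin N) ℂ) i0 k) * v k := by
    have h1 : ∑ k, A i0 k * v k = (hH.eigenvalues i : ℂ) * v i0 := by
      have h := congrFun hv i0
      simpa [Matrix.mulVec, dotProduct, Pi.smul_apply, Complex.real_smul] using h
    have h2 : ∑ k, (1 : Matrix (Fin N) (Fin N) ℂ) i0 k * v k = v i0 := by
      simp [Matrix.one_apply, ite_mul]
    simp only [sub_mul, Finset.sum_sub_distrib, h1, h2, one_mul]
  have hbound : |hH.eigenvalues i - 1| * ‖v i0‖ ≤ (N * δ) * ‖v i0‖ := by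
    have hl : |hH.eigenvalues i - 1| * ‖v i0‖ = ‖((hH.eigenvalues i : ℂ) - 1) * v i0‖ := by
      rw [norm_mul]
      congr 1
      rw [show ((hH.eigenvalues i : ℂ) - 1) = ((hH.eigenvalues i - 1 : ℝ) : ℂ) by push_cast; ring,
        Complex.norm_real, Real.norm_eq_abs]
    rw [hl, key]
    calc ‖∑ k, (A i0 k - (1 : Matrix (Fin N) (Fin N) ℂ) i0 k) * v k‖
        ≤ ∑ k, ‖(A i0 k - (1 : Matrix (Fin N) (Fin N) ℂ) i0 k) * v k‖ := norm_sum_le _ _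
      _ ≤ ∑ _k : Fin N, δ * ‖v i0‖ := by
          refine Finset.sum_le_sum fun k _ => ?_
          rw [norm_mul]
          exact mul_le_mul (hentry i0 k) (hmax k (Finset.mem_univ k)) (norm_nonneg _) hδ0
      _ = (N * δ) * ‖v i0‖ := by
          rw [Finset.sum_const, Finset.card_univ, Fintype.card_fin, nsmul_eq_mul]; ring
  exact le_of_mul_le_mul_right hbound hpos

private lemma aux_sqrt_abs {x : ℝ} (hx : 0 ≤ x) : |Real.sqrt x - 1| ≤ |x - 1| := by
  set s := Real.sqrt x with hs_def
  have hs : 0 ≤ s := Real.sqrt_nonneg x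
  have hsq : s ^ 2 = x := Real.sq_sqrt hx
  have hprod : (s - 1) * (s + 1) = x - 1 := by nlinarith [hsq]
  calc |s - 1| ≤ |s - 1| * (s + 1) := le_mul_of_one_le_right (abs_nonneg _) (by linarith)
    _ = |s - 1| * |s + 1| := by rw [abs_of_nonneg (by linarith : (0:ℝ) ≤ s + 1)]
    _ = |(s - 1) * (s + 1)| := (abs_mul _ _).symm
    _ = |x - 1| := by rw [hprod]

open Matrix in
noncomputable def Matrix.PosSemidef.sqrt {n : Type*} [Fintype n] [DecidableEq n]
    {A : Matrix n n ℂ} (hA : A.PosSemidef) : Matrix n n ℂ :=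
  (hA.1.eigenvectorUnitary : Matrix n n ℂ) * diagonal ((↑) ∘ Real.sqrt ∘ hA.1.eigenvalues) *
    star (hA.1.eigenvectorUnitary : Matrix n n ℂ)

open Matrix in
lemma Matrix.PosSemidef.posSemidef_sqrt {n : Type*} [Fintype n] [DecidableEq n]
    {A : Matrix n n ℂ} (hA : A.PosSemidef) : hA.sqrt.PosSemidef := by
  unfold Matrix.PosSemidef.sqrt
  have hD : (diagonal ((↑) ∘ Real.sqrt ∘ hA.1.eigenvalues) : Matrix n n ℂ).PosSemidef := by
    rw [posSemidef_diagonal_iff]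
    intro i
    simp [Complex.zero_le_real, Real.sqrt_nonneg]
  have := hD.mul_mul_conjTranspose_same (hA.1.eigenvectorUnitary : Matrix n n ℂ)
  simpa only [Matrix.star_eq_conjTranspose] using this

open Matrix in
lemma Matrix.PosSemidef.sqrt_mul_self {n : Type*} [Fintype n] [DecidableEq n]
    {A : Matrix n n ℂ} (hA : A.PosSemidef) : hA.sqrt * hA.sqrt = A := by
  unfold Matrix.PosSemidef.sqrt
  have hU : star (hA.1.eigenvectorUnitary : Matrix n n ℂ) * (hA.1.eigenvectorUnitary : Matrix n n ℂ)
      = 1 := Matrix.mem_unitaryGroup_iff'.mp hA.1.eigenvectorUnitary.2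
  conv_rhs => rw [hA.1.spectral_theorem, Unitary.conjStarAlgAut_apply]
  calc _ = (hA.1.eigenvectorUnitary : Matrix n n ℂ) *
        (diagonal ((↑) ∘ Real.sqrt ∘ hA.1.eigenvalues) *
          (star (hA.1.eigenvectorUnitary : Matrix n n ℂ) * (hA.1.eigenvectorUnitary : Matrix n n ℂ)) *
          diagonal ((↑) ∘ Real.sqrt ∘ hA.1.eigenvalues)) *
        star (hA.1.eigenvectorUnitary : Matrix n n ℂ) := by simp only [mul_assoc]
    _ = _ := by
      rw [hU, mul_one, diagonal_mul_diagonal]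
      refine congrArg (fun d => (hA.1.eigenvectorUnitary : Matrix n n ℂ) * diagonal d *
        star (hA.1.eigenvectorUnitary : Matrix n n ℂ)) (funext fun i => ?_)
      simp only [Function.comp_apply]
      rw [← Complex.ofReal_mul, Real.mul_self_sqrt (hA.eigenvalues_nonneg i)]
      rfl

/-- Let `A` be an `N×N` Hermitian positive matrix with
`|a_{ij} − δ_{ij}| ≤ δ` for some `0 < δ ≤ 1/(100N)`.  Then every eigenvalue `λ` of
`A` satisfies `|λ − 1| ≤ 2Nδ`, and there is a Hermitian matrix `B` with
`A = B B*` and `|b_{ij} − δ_{ij}| ≤ 2Nδ`. -/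
theorem stmt_8 (N : ℕ) (A : Matrix (Fin N) (Fin N) ℂ) (hA : A.PosDef)
    (δ : ℝ) (hδ0 : 0 < δ) (hδ : δ ≤ 1 / (100 * N))
    (hentry : ∀ i j, ‖A i j - (1 : Matrix (Fin N) (Fin N) ℂ) i j‖ ≤ δ) :
    (∀ μ ∈ spectrum ℂ A, ‖μ - 1‖ ≤ 2 * N * δ) ∧
      ∃ B : Matrix (Fin N) (Fin N) ℂ, B.IsHermitian ∧ A = B * B.conjTranspose ∧
        ∀ i j, ‖B i j - (1 : Matrix (Fin N) (Fin N) ℂ) i j‖ ≤ 2 * N * δ := by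
  have hP := hA.posSemidef
  have hH := hP.1
  have heig : ∀ k, |hH.eigenvalues k - 1| ≤ N * δ := aux_eig hH hδ0.le hentry
  have hNδ : (N : ℝ) * δ ≤ 2 * N * δ := by
    have : (0:ℝ) ≤ N * δ := mul_nonneg (Nat.cast_nonneg N) hδ0.le
    linarith
  constructor
  · intro μ hμ
    have hspec : spectrum ℂ A = Set.range (fun k => (hH.eigenvalues k : ℂ)) := by
      conv_lhs => rw [hH.spectral_theorem, Unitary.conjStarAlgAut_apply, Unitary.spectrum_star_right_conjugate,
        spectrum_diagonal]
      rfl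
    rw [hspec] at hμ
    obtain ⟨k, rfl⟩ := hμ
    rw [show ((hH.eigenvalues k : ℂ) - 1) = ((hH.eigenvalues k - 1 : ℝ) : ℂ) by push_cast; ring,
      Complex.norm_real, Real.norm_eq_abs]
    exact (heig k).trans hNδ
  · refine ⟨hP.sqrt, hP.posSemidef_sqrt.1, ?_, ?_⟩
    · rw [hP.posSemidef_sqrt.1.eq, hP.sqrt_mul_self]
    · intro i j
      have hone : (1 : Matrix (Fin N) (Fin N) ℂ)
          = (hH.eigenvectorUnitary : Matrix (Fin N) (Fin N) ℂ)
            * Matrix.diagonal (fun _ => (1 : ℂ))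
            * star (hH.eigenvectorUnitary : Matrix (Fin N) (Fin N) ℂ) := by
        rw [Matrix.diagonal_one, mul_one, Matrix.mem_unitaryGroup_iff.mp hH.eigenvectorUnitary.2]
      have hsub : hP.sqrt - (1 : Matrix (Fin N) (Fin N) ℂ)
          = (hH.eigenvectorUnitary : Matrix (Fin N) (Fin N) ℂ)
            * Matrix.diagonal (fun k => ((Real.sqrt (hH.eigenvalues k) : ℂ) - 1))
            * star (hH.eigenvectorUnitary : Matrix (Fin N) (Fin N) ℂ) := by
        conv_lhs => rw [hone]
        rw [Matrix.PosSemidef.sqrt, ← Matrix.sub_mul, ← Matrix.mul_sub, Matrix.diagonal_sub]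
        rfl
      have : ‖(hP.sqrt - (1 : Matrix (Fin N) (Fin N) ℂ)) i j‖ ≤ 2 * N * δ := by
        rw [hsub]
        refine aux_entry_bound hH.eigenvectorUnitary _ _ (fun k => ?_) i j
        rw [show ((Real.sqrt (hH.eigenvalues k) : ℂ) - 1)
            = ((Real.sqrt (hH.eigenvalues k) - 1 : ℝ) : ℂ) by push_cast; ring,
          Complex.norm_real, Real.norm_eq_abs]
        exact ((aux_sqrt_abs (hP.eigenvalues_nonneg k)).trans (heig k)).trans hNδ
      simpa [Matrix.sub_apply] using this
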